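/- Let q ≥ 2 be an integer, Ψ(λ) = (q+1)√(4q − λ²)/(2((q+1)² − λ²)) on [−2√q, 2√q], and Φ_n the spherical function. There exists a constant C depending only on q such that for every integer n ≥ 1 and every t > 0, |∫_{−2√q}^{2√q} e^{itλ} Ψ(λ) Φ_n'(λ) dλ| ≤ C/t. -/

import Mathlib

open Set Real MeasureTheory intervalIntegral Polynomial Polynomial.Chebyshev Filter

/-- `Ψ(λ) = (q+1)√(4q − λ²) / (2((q+1)² − λ²))`. -/
noncomputable def Psi (q : ℕ) (l : ℝ) : ℝ :=
  ((q:ℝ)+1) * Real.sqrt (4*q - l^2) / (2*(((q:ℝ)+1)^2 - l^2))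

/-- The spherical function of the `(q+1)`-regular tree. -/
noncomputable def Phi (q n : ℕ) (l : ℝ) : ℝ :=
  (q:ℝ) ^ (-(n:ℝ)/2) *
    ((2/((q:ℝ)+1)) * (Polynomial.Chebyshev.T ℝ (n:ℤ)).eval (l/(2*Real.sqrt q))
      + (((q:ℝ)-1)/((q:ℝ)+1)) * (Polynomial.Chebyshev.U ℝ (n:ℤ)).eval (l/(2*Real.sqrt q)))



section Aux

lemma abs_T_le (n : ℤ) {x : ℝ} (hx : x ∈ Set.Icc (-1:ℝ) 1) :
    |((T ℝ n).eval x)| ≤ 1 := by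
  obtain ⟨θ, _, rfl⟩ := Real.surjOn_cos hx
  rw [Polynomial.Chebyshev.T_real_cos]
  exact Real.abs_cos_le_one _

lemma abs_U_le (n : ℕ) {x : ℝ} (hx : x ∈ Set.Icc (-1:ℝ) 1) :
    |((U ℝ (n:ℤ)).eval x)| ≤ (n:ℝ) + 1 := by
  have hx1 : |x| ≤ 1 := abs_le.mpr ⟨hx.1, hx.2⟩
  induction n with
  | zero => simp [Polynomial.Chebyshev.U_zero]
  | succ n ih =>
    rw [show ((n+1:ℕ):ℤ) = (n:ℤ)+1 by push_cast; ring,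
      Polynomial.Chebyshev.U_eq_X_mul_U_add_T]
    simp only [Polynomial.eval_add, Polynomial.eval_mul, Polynomial.eval_X]
    calc |x * (U ℝ (n:ℤ)).eval x + (T ℝ ((n:ℤ)+1)).eval x|
        ≤ |x| * |(U ℝ (n:ℤ)).eval x| + |(T ℝ ((n:ℤ)+1)).eval x| := by
          rw [← abs_mul]; exact abs_add_le _ _
      _ ≤ 1 * ((n:ℝ)+1) + 1 :=
          add_le_add (mul_le_mul hx1 ih (abs_nonneg _) zero_le_one) (abs_T_le _ hx)
      _ ≤ (↑(n+1):ℝ) + 1 := by push_cast; linarith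

lemma abs_T'_le (n : ℕ) {x : ℝ} (hx : x ∈ Set.Icc (-1:ℝ) 1) :
    |(Polynomial.derivative (T ℝ (n:ℤ))).eval x| ≤ ((n:ℝ)+1)^2 := by
  rw [Polynomial.Chebyshev.T_derivative_eq_U]
  match n with
  | 0 => simp
  | (m+1) =>
    rw [show ((m+1:ℕ):ℤ) - 1 = (m:ℤ) by push_cast; ring]
    simp only [Polynomial.eval_mul, Polynomial.eval_intCast, abs_mul]
    push_cast
    calc |(m:ℝ)+1| * |(U ℝ (m:ℤ)).eval x| ≤ ((m:ℝ)+1) * ((m:ℝ)+1) := by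
          rw [abs_of_nonneg (by positivity)]
          exact mul_le_mul le_rfl (abs_U_le m hx) (abs_nonneg _) (by positivity)
      _ ≤ ((m:ℝ)+1+1)^2 := by nlinarith [ Nat.cast_nonneg (α := ℝ) m ]

lemma abs_U'_le (n : ℕ) {x : ℝ} (hx : x ∈ Set.Icc (-1:ℝ) 1) :
    |(Polynomial.derivative (U ℝ (n:ℤ))).eval x| ≤ ((n:ℝ)+1)^3 := by
  have hx1 : |x| ≤ 1 := abs_le.mpr ⟨hx.1, hx.2⟩
  induction n with
  | zero => simp [Polynomial.Chebyshev.U_zero]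
  | succ n ih =>
    rw [show ((n+1:ℕ):ℤ) = (n:ℤ)+1 by push_cast; ring,
      Polynomial.Chebyshev.U_eq_X_mul_U_add_T,
      Polynomial.derivative_add, Polynomial.derivative_mul, Polynomial.derivative_X,
      Polynomial.Chebyshev.T_derivative_eq_U, show ((n:ℤ)+1) - 1 = (n:ℤ) by ring]
    simp only [Polynomial.eval_add, Polynomial.eval_mul, Polynomial.eval_X, one_mul,
      Polynomial.eval_one, Polynomial.eval_intCast]
    push_cast
    have hU := abs_U_le n hx
    have hn : (0:ℝ) ≤ n := Nat.cast_nonneg n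
    set u := (U ℝ (n:ℤ)).eval x
    set du := (Polynomial.derivative (U ℝ (n:ℤ))).eval x
    have h1 : |u + x * du + ((n:ℝ)+1) * u| ≤ |u| + |x| * |du| + ((n:ℝ)+1) * |u| := by
      calc |u + x * du + ((n:ℝ)+1) * u| ≤ |u + x * du| + |((n:ℝ)+1) * u| := abs_add_le _ _
        _ ≤ (|u| + |x * du|) + ((n:ℝ)+1) * |u| := by
            rw [abs_mul, abs_of_nonneg (by positivity : (0:ℝ) ≤ (n:ℝ)+1)]
            exact add_le_add_left (abs_add_le _ _) _
        _ = _ := by rw [abs_mul]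
    refine le_trans h1 ?_
    have h3 : |x| * |du| ≤ ((n:ℝ)+1)^3 := by
      calc |x| * |du| ≤ 1 * (((n:ℝ)+1)^3) := mul_le_mul hx1 ih (abs_nonneg _) zero_le_one
        _ = _ := one_mul _
    nlinarith [abs_nonneg du]

lemma abs_T''_le (n : ℕ) {x : ℝ} (hx : x ∈ Set.Icc (-1:ℝ) 1) :
    |(Polynomial.derivative (Polynomial.derivative (T ℝ (n:ℤ)))).eval x| ≤ ((n:ℝ)+1)^4 := by
  rw [Polynomial.Chebyshev.T_derivative_eq_U]
  match n with
  | 0 => simp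
  | (m+1) =>
    rw [show ((m+1:ℕ):ℤ) - 1 = (m:ℤ) by push_cast; ring, Polynomial.derivative_mul]
    simp only [Polynomial.derivative_intCast, zero_mul, zero_add, Polynomial.eval_mul,
      Polynomial.eval_intCast, abs_mul]
    push_cast
    have h2 : |(m:ℝ)+1| = (m:ℝ)+1 := abs_of_nonneg (by positivity)
    rw [h2]
    have := abs_U'_le m hx
    have hn : (0:ℝ) ≤ m := Nat.cast_nonneg m
    nlinarith [abs_nonneg ((Polynomial.derivative (U ℝ (m:ℤ))).eval x)]

lemma abs_U''_le (n : ℕ) {x : ℝ} (hx : x ∈ Set.Icc (-1:ℝ) 1) :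
    |(Polynomial.derivative (Polynomial.derivative (U ℝ (n:ℤ)))).eval x| ≤ ((n:ℝ)+1)^5 := by
  have hx1 : |x| ≤ 1 := abs_le.mpr ⟨hx.1, hx.2⟩
  induction n with
  | zero => simp [Polynomial.Chebyshev.U_zero]
  | succ n ih =>
    rw [show ((n+1:ℕ):ℤ) = (n:ℤ)+1 by push_cast; ring,
      Polynomial.Chebyshev.U_eq_X_mul_U_add_T,
      Polynomial.derivative_add, Polynomial.derivative_mul, Polynomial.derivative_X,
      Polynomial.Chebyshev.T_derivative_eq_U, show ((n:ℤ)+1) - 1 = (n:ℤ) by ring]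
    simp only [Polynomial.derivative_add, Polynomial.derivative_mul, Polynomial.derivative_X,
      Polynomial.derivative_one, Polynomial.derivative_intCast, zero_mul, zero_add, one_mul,
      add_zero, mul_one]
    simp only [Polynomial.eval_add, Polynomial.eval_mul, Polynomial.eval_X, one_mul,
      Polynomial.eval_one, Polynomial.eval_intCast, Polynomial.eval_zero, zero_mul, zero_add,
      add_zero, mul_one]
    push_cast
    have hU' := abs_U'_le n hx
    have hn : (0:ℝ) ≤ n := Nat.cast_nonneg n
    set du := (Polynomial.derivative (U ℝ (n:ℤ))).eval x
    set ddu := (Polynomial.derivative (Polynomial.derivative (U ℝ (n:ℤ)))).eval x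
    have hxd : |x| * |ddu| ≤ ((n:ℝ)+1)^5 := by
      calc |x| * |ddu| ≤ 1 * (((n:ℝ)+1)^5) := mul_le_mul hx1 ih (abs_nonneg _) zero_le_one
        _ = _ := one_mul _
    have h1 : ∀ z w v : ℝ, |z + (w + v)| ≤ |z| + |w| + |v| := by
      intro z w v
      calc |z + (w + v)| ≤ |z| + |w + v| := abs_add_le _ _
        _ ≤ |z| + (|w| + |v|) := add_le_add_right (abs_add_le _ _) _
        _ = _ := by ring
    have h2 := h1 (du + (du + x * ddu)) (((n:ℝ)+1) * du) 0
    have h3 : |du + (du + x * ddu)| ≤ |du| + |du| + |x| * |ddu| := by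
      have := h1 du du (x * ddu)
      rw [abs_mul] at this; linarith
    have h4 : |((n:ℝ)+1) * du| = ((n:ℝ)+1) * |du| := by
      rw [abs_mul, abs_of_nonneg (by positivity : (0:ℝ) ≤ (n:ℝ)+1)]
    calc |du + (du + x * ddu) + ((n:ℝ)+1) * du|
        ≤ |du + (du + x * ddu)| + |((n:ℝ)+1) * du| := abs_add_le _ _
      _ ≤ (|du| + |du| + |x| * |ddu|) + ((n:ℝ)+1) * |du| := by rw [h4]; linarith
      _ ≤ ((n:ℝ)+1+1)^5 := by nlinarith [abs_nonneg du]

noncomputable def Bq (q n : ℕ) : Polynomial ℝ :=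
  Polynomial.C (2/((q:ℝ)+1)) * T ℝ (n:ℤ) + Polynomial.C (((q:ℝ)-1)/((q:ℝ)+1)) * U ℝ (n:ℤ)

noncomputable def Pq (q n : ℕ) : Polynomial ℝ :=
  Polynomial.C ((q:ℝ) ^ (-(n:ℝ)/2)) *
    ((Bq q n).comp (Polynomial.C (2*Real.sqrt q)⁻¹ * Polynomial.X))

lemma Phi_eq (q n : ℕ) : Phi q n = fun l => (Pq q n).eval l := by
  funext l
  simp only [Phi, Pq, Bq, Polynomial.eval_mul, Polynomial.eval_C, Polynomial.eval_comp,
    Polynomial.eval_add, Polynomial.eval_X, div_eq_mul_inv, mul_comm]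

lemma Pq_derivative (q n : ℕ) :
    Polynomial.derivative (Pq q n) =
      Polynomial.C ((q:ℝ) ^ (-(n:ℝ)/2) * (2*Real.sqrt q)⁻¹) *
        ((Polynomial.derivative (Bq q n)).comp (Polynomial.C (2*Real.sqrt q)⁻¹ * Polynomial.X)) := by
  rw [Pq, Polynomial.derivative_C_mul, Polynomial.derivative_comp, Polynomial.derivative_C_mul_X]
  rw [Polynomial.C_mul]
  ring

lemma Pq_derivative2 (q n : ℕ) :
    Polynomial.derivative (Polynomial.derivative (Pq q n)) =
      Polynomial.C ((q:ℝ) ^ (-(n:ℝ)/2) * (2*Real.sqrt q)⁻¹ * (2*Real.sqrt q)⁻¹) *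
        ((Polynomial.derivative (Polynomial.derivative (Bq q n))).comp
          (Polynomial.C (2*Real.sqrt q)⁻¹ * Polynomial.X)) := by
  rw [Pq_derivative, Polynomial.derivative_C_mul, Polynomial.derivative_comp,
    Polynomial.derivative_C_mul_X]
  rw [← mul_assoc, ← Polynomial.C_mul, mul_assoc]

lemma aux_combo (q n : ℕ) (hq : 1 ≤ q) {u v : ℝ} (hn1 : (0:ℝ) ≤ ((n:ℝ)+1))
    (hu : |u| ≤ ((n:ℝ)+1)^5) (hv : |v| ≤ ((n:ℝ)+1)^5) :
    |2/((q:ℝ)+1) * u + ((q:ℝ)-1)/((q:ℝ)+1) * v| ≤ ((n:ℝ)+1)^5 := by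
  have hq1 : (1:ℝ) ≤ q := by exact_mod_cast hq
  have hα : (0:ℝ) ≤ 2/((q:ℝ)+1) := by positivity
  have hβ : (0:ℝ) ≤ ((q:ℝ)-1)/((q:ℝ)+1) := by
    apply div_nonneg <;> linarith
  have hsum : 2/((q:ℝ)+1) + ((q:ℝ)-1)/((q:ℝ)+1) = 1 := by
    field_simp
    ring
  calc |2/((q:ℝ)+1) * u + ((q:ℝ)-1)/((q:ℝ)+1) * v|
      ≤ 2/((q:ℝ)+1) * |u| + ((q:ℝ)-1)/((q:ℝ)+1) * |v| := by
        refine (abs_add_le _ _).trans ?_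
        rw [abs_mul, abs_mul, abs_of_nonneg hα, abs_of_nonneg hβ]
    _ ≤ 2/((q:ℝ)+1) * ((n:ℝ)+1)^5 + ((q:ℝ)-1)/((q:ℝ)+1) * ((n:ℝ)+1)^5 := by
        exact add_le_add (mul_le_mul_of_nonneg_left hu hα) (mul_le_mul_of_nonneg_left hv hβ)
    _ = ((n:ℝ)+1)^5 := by rw [← add_mul, hsum, one_mul]

lemma pow_le_pow5 (n : ℕ) {k : ℕ} (hk : k ≤ 5) : ((n:ℝ)+1)^k ≤ ((n:ℝ)+1)^5 :=
  pow_le_pow_right₀ (by linarith [Nat.cast_nonneg (α:=ℝ) n]) hk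

lemma abs_eval_dBq_le (q n : ℕ) (hq : 1 ≤ q) {x : ℝ} (hx : x ∈ Set.Icc (-1:ℝ) 1) :
    |(Polynomial.derivative (Bq q n)).eval x| ≤ ((n:ℝ)+1)^5 := by
  rw [Bq, Polynomial.derivative_add, Polynomial.derivative_C_mul, Polynomial.derivative_C_mul]
  simp only [Polynomial.eval_add, Polynomial.eval_mul, Polynomial.eval_C]
  exact aux_combo q n hq (by positivity)
    ((abs_T'_le n hx).trans (pow_le_pow5 n (by norm_num)))
    ((abs_U'_le n hx).trans (pow_le_pow5 n (by norm_num)))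

lemma abs_eval_ddBq_le (q n : ℕ) (hq : 1 ≤ q) {x : ℝ} (hx : x ∈ Set.Icc (-1:ℝ) 1) :
    |(Polynomial.derivative (Polynomial.derivative (Bq q n))).eval x| ≤ ((n:ℝ)+1)^5 := by
  rw [Bq, Polynomial.derivative_add, Polynomial.derivative_C_mul, Polynomial.derivative_C_mul,
    Polynomial.derivative_add, Polynomial.derivative_C_mul, Polynomial.derivative_C_mul]
  simp only [Polynomial.eval_add, Polynomial.eval_mul, Polynomial.eval_C]
  exact aux_combo q n hq (by positivity)
    ((abs_T''_le n hx).trans (pow_le_pow5 n (by norm_num)))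
    ((abs_U''_le n hx).trans (pow_le_pow5 n (by norm_num)))

lemma sqrtq_facts (q : ℕ) (hq : 2 ≤ q) :
    (0:ℝ) < Real.sqrt q ∧ (1:ℝ) ≤ Real.sqrt q := by
  have hq0 : (0:ℝ) < q := by exact_mod_cast Nat.lt_of_lt_of_le Nat.zero_lt_two hq
  refine ⟨Real.sqrt_pos.mpr hq0, ?_⟩
  rw [show (1:ℝ) = Real.sqrt 1 from (Real.sqrt_one).symm]
  exact Real.sqrt_le_sqrt (by exact_mod_cast Nat.one_le_of_lt hq)

lemma x_mem_Icc (q : ℕ) (hq : 2 ≤ q) {l : ℝ} (hl : |l| ≤ 2*Real.sqrt q) :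
    (2*Real.sqrt q)⁻¹ * l ∈ Set.Icc (-1:ℝ) 1 := by
  obtain ⟨hs, _⟩ := sqrtq_facts q hq
  rw [Set.mem_Icc, ← abs_le, abs_mul, abs_inv, abs_of_pos (by positivity : (0:ℝ) < 2*Real.sqrt q)]
  calc (2*Real.sqrt q)⁻¹ * |l| ≤ (2*Real.sqrt q)⁻¹ * (2*Real.sqrt q) :=
        mul_le_mul_of_nonneg_left hl (by positivity)
    _ = 1 := inv_mul_cancel₀ (by positivity)

lemma abs_eval_dPq_le (q n : ℕ) (hq : 2 ≤ q) {l : ℝ} (hl : |l| ≤ 2*Real.sqrt q) :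
    |(Polynomial.derivative (Pq q n)).eval l| ≤ (q:ℝ)^(-(n:ℝ)/2) * ((n:ℝ)+1)^5 := by
  obtain ⟨hs, hs1⟩ := sqrtq_facts q hq
  have hq0 : (0:ℝ) < q := by exact_mod_cast Nat.lt_of_lt_of_le Nat.zero_lt_two hq
  have hr0 : (0:ℝ) < (2*Real.sqrt q)⁻¹ := by positivity
  have hr1 : (2*Real.sqrt q)⁻¹ ≤ 1 := by
    rw [inv_le_one_iff₀]; right; linarith
  have hx := x_mem_Icc q hq hl
  have hc : (0:ℝ) < (q:ℝ)^(-(n:ℝ)/2) := Real.rpow_pos_of_pos hq0 _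
  rw [Pq_derivative]
  simp only [Polynomial.eval_mul, Polynomial.eval_C, Polynomial.eval_comp, Polynomial.eval_X]
  rw [abs_mul, abs_of_pos (mul_pos hc hr0)]
  calc ((q:ℝ)^(-(n:ℝ)/2) * (2*Real.sqrt q)⁻¹) * |(Polynomial.derivative (Bq q n)).eval
          ((2*Real.sqrt q)⁻¹ * l)|
      ≤ ((q:ℝ)^(-(n:ℝ)/2) * 1) * (((n:ℝ)+1)^5) :=
        mul_le_mul (by nlinarith) (abs_eval_dBq_le q n (by omega) hx) (abs_nonneg _) (by positivity)
    _ = (q:ℝ)^(-(n:ℝ)/2) * ((n:ℝ)+1)^5 := by ring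

lemma abs_eval_ddPq_le (q n : ℕ) (hq : 2 ≤ q) {l : ℝ} (hl : |l| ≤ 2*Real.sqrt q) :
    |(Polynomial.derivative (Polynomial.derivative (Pq q n))).eval l|
      ≤ (q:ℝ)^(-(n:ℝ)/2) * ((n:ℝ)+1)^5 := by
  obtain ⟨hs, hs1⟩ := sqrtq_facts q hq
  have hq0 : (0:ℝ) < q := by exact_mod_cast Nat.lt_of_lt_of_le Nat.zero_lt_two hq
  have hr0 : (0:ℝ) < (2*Real.sqrt q)⁻¹ := by positivity
  have hr1 : (2*Real.sqrt q)⁻¹ ≤ 1 := by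
    rw [inv_le_one_iff₀]; right; linarith
  have hx := x_mem_Icc q hq hl
  have hc : (0:ℝ) < (q:ℝ)^(-(n:ℝ)/2) := Real.rpow_pos_of_pos hq0 _
  rw [Pq_derivative2]
  simp only [Polynomial.eval_mul, Polynomial.eval_C, Polynomial.eval_comp, Polynomial.eval_X]
  rw [abs_mul, abs_of_pos (by positivity)]
  calc ((q:ℝ)^(-(n:ℝ)/2) * (2*Real.sqrt q)⁻¹ * (2*Real.sqrt q)⁻¹) *
        |(Polynomial.derivative (Polynomial.derivative (Bq q n))).eval ((2*Real.sqrt q)⁻¹ * l)|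
      ≤ ((q:ℝ)^(-(n:ℝ)/2) * 1 * 1) * (((n:ℝ)+1)^5) :=
        mul_le_mul (by nlinarith [mul_pos hc hr0]) (abs_eval_ddBq_le q n (by omega) hx) (abs_nonneg _)
          (by positivity)
    _ = (q:ℝ)^(-(n:ℝ)/2) * ((n:ℝ)+1)^5 := by ring

lemma exists_M (q : ℕ) (hq : 2 ≤ q) :
    ∃ M : ℝ, 1 ≤ M ∧ ∀ n : ℕ, (q:ℝ)^(-(n:ℝ)/2) * ((n:ℝ)+1)^5 ≤ M := by
  have hq0 : (0:ℝ) < q := by exact_mod_cast Nat.lt_of_lt_of_le Nat.zero_lt_two hq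
  have hq1 : (1:ℝ) < q := by exact_mod_cast Nat.lt_of_lt_of_le Nat.one_lt_two hq
  have hr : 1 < Real.sqrt q := by
    rw [show (1:ℝ) = Real.sqrt 1 from (Real.sqrt_one).symm]
    exact Real.sqrt_lt_sqrt (by norm_num) hq1
  have hr0 : (0:ℝ) < Real.sqrt q := by linarith
  have hkey : ∀ n : ℕ, (q:ℝ)^(-(n:ℝ)/2) * ((n:ℝ)+1)^5 = ((n:ℝ)+1)^5 / (Real.sqrt q)^n := by
    intro n
    have h1 : (q:ℝ)^(-(n:ℝ)/2) = ((Real.sqrt q)^n)⁻¹ := by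
      rw [neg_div, Real.rpow_neg (le_of_lt hq0)]
      congr 1
      rw [show ((n:ℝ)/2) = (1/(2:ℝ))*(n:ℝ) by ring, Real.rpow_mul (le_of_lt hq0),
        ← Real.sqrt_eq_rpow, Real.rpow_natCast]
    rw [h1, div_eq_mul_inv, mul_comm]
  have htend : Filter.Tendsto (fun n : ℕ => ((n:ℝ)+1)^5 / (Real.sqrt q)^n)
      Filter.atTop (nhds 0) := by
    have h0 := tendsto_pow_const_div_const_pow_of_one_lt 5 hr
    have h1 : Filter.Tendsto (fun n : ℕ => (((n+1:ℕ)):ℝ)^5 / (Real.sqrt q)^(n+1))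
        Filter.atTop (nhds 0) := h0.comp (Filter.tendsto_add_atTop_nat 1)
    have h2 := h1.mul_const (Real.sqrt q)
    rw [zero_mul] at h2
    refine h2.congr (fun n => ?_)
    have hrn : (Real.sqrt q)^(n+1) = (Real.sqrt q)^n * Real.sqrt q := pow_succ _ n
    push_cast
    rw [hrn, div_mul_eq_mul_div, mul_comm ((Real.sqrt q)^n) (Real.sqrt q),
      ← div_div, mul_div_assoc, div_self (ne_of_gt hr0), mul_one]
  obtain ⟨M0, hM0⟩ := htend.bddAbove_range
  refine ⟨max M0 1, le_max_right _ _, fun n => ?_⟩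
  rw [hkey n]
  exact le_trans (hM0 (Set.mem_range_self n)) (le_max_left _ _)

noncomputable def psiD (q : ℕ) (l : ℝ) : ℝ :=
  (((q:ℝ)+1) * (1/(2*Real.sqrt (4*q - l^2)) * (-(2*l))) * (2*(((q:ℝ)+1)^2 - l^2))
    - ((q:ℝ)+1) * Real.sqrt (4*q - l^2) * (2*(-(2*l)))) / (2*(((q:ℝ)+1)^2 - l^2))^2

lemma sqrt4q (q : ℕ) : Real.sqrt (4*(q:ℝ)) = 2*Real.sqrt q := by
  rw [show (4:ℝ)*q = (2*Real.sqrt q)^2 by rw [mul_pow, Real.sq_sqrt (by positivity)]; ring]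
  exact Real.sqrt_sq (by positivity)

lemma sq_lt_4q (q : ℕ) {l : ℝ} (hl : l ∈ Set.Ioo (-(2*Real.sqrt q)) (2*Real.sqrt q)) :
    l^2 < 4*(q:ℝ) := by
  have h := sq_lt_sq' hl.1 hl.2
  have h2 : (2*Real.sqrt q)^2 = 4*(q:ℝ) := by
    rw [mul_pow, Real.sq_sqrt (by positivity)]; ring
  linarith

lemma sq_le_4q (q : ℕ) {l : ℝ} (hl : l ∈ Set.Icc (-(2*Real.sqrt q)) (2*Real.sqrt q)) :
    l^2 ≤ 4*(q:ℝ) := by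
  have h := sq_le_sq' hl.1 hl.2
  have h2 : (2*Real.sqrt q)^2 = 4*(q:ℝ) := by
    rw [mul_pow, Real.sq_sqrt (by positivity)]; ring
  linarith

lemma den_ge (q : ℕ) (hq : 2 ≤ q) {l : ℝ} (hl : l^2 ≤ 4*(q:ℝ)) :
    (1:ℝ) ≤ ((q:ℝ)+1)^2 - l^2 := by
  have hq2 : (2:ℝ) ≤ q := by exact_mod_cast hq
  nlinarith

lemma hasDerivAt_Psi (q : ℕ) (hq : 2 ≤ q) {l : ℝ}
    (hl : l ∈ Set.Ioo (-(2*Real.sqrt q)) (2*Real.sqrt q)) :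
    HasDerivAt (Psi q) (psiD q l) l := by
  have h4q : 0 < 4*(q:ℝ) - l^2 := by linarith [sq_lt_4q q hl]
  have hden : (2*(((q:ℝ)+1)^2 - l^2)) ≠ 0 := by
    have := den_ge q hq (le_of_lt (sq_lt_4q q hl))
    positivity
  have hinner : HasDerivAt (fun x : ℝ => 4*(q:ℝ) - x^2) (-(2*l)) l := by
    have h := (hasDerivAt_pow 2 l).const_sub (4*(q:ℝ))
    simpa using h
  have hsqrt : HasDerivAt (fun x : ℝ => Real.sqrt (4*(q:ℝ) - x^2))
      (1/(2*Real.sqrt (4*q - l^2)) * (-(2*l))) l := by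
    have h := (Real.hasDerivAt_sqrt (ne_of_gt h4q)).comp l hinner
    simpa [Function.comp_def] using h
  have hnum := hsqrt.const_mul ((q:ℝ)+1)
  have hdenD : HasDerivAt (fun x : ℝ => 2*(((q:ℝ)+1)^2 - x^2)) (2*(-(2*l))) l := by
    have h := ((hasDerivAt_pow 2 l).const_sub (((q:ℝ)+1)^2)).const_mul (2:ℝ)
    simpa using h
  have hdiv := hnum.div hdenD hden
  exact hdiv

lemma abs_Psi_le (q : ℕ) (hq : 2 ≤ q) {l : ℝ}
    (hl : l ∈ Set.Icc (-(2*Real.sqrt q)) (2*Real.sqrt q)) :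
    |Psi q l| ≤ ((q:ℝ)+1) * (2*Real.sqrt q) := by
  have h4q : 0 ≤ 4*(q:ℝ) - l^2 := by linarith [sq_le_4q q hl]
  have hden := den_ge q hq (sq_le_4q q hl)
  have hsle : Real.sqrt (4*(q:ℝ) - l^2) ≤ 2*Real.sqrt q := by
    rw [← sqrt4q q]
    exact Real.sqrt_le_sqrt (by nlinarith [sq_nonneg l])
  have hnum0 : 0 ≤ ((q:ℝ)+1) * Real.sqrt (4*q - l^2) := by positivity
  rw [Psi, abs_div, abs_of_nonneg hnum0, abs_of_pos (by linarith : (0:ℝ) < 2*(((q:ℝ)+1)^2 - l^2))]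
  calc ((q:ℝ)+1) * Real.sqrt (4*q - l^2) / (2*(((q:ℝ)+1)^2 - l^2))
      ≤ ((q:ℝ)+1) * Real.sqrt (4*q - l^2) / 2 := by
        apply div_le_div_of_nonneg_left hnum0 (by norm_num) (by linarith)
    _ ≤ ((q:ℝ)+1) * (2*Real.sqrt q) := by
        rw [div_le_iff₀ (by norm_num : (0:ℝ) < 2)]
        nlinarith [Real.sqrt_nonneg (4*(q:ℝ) - l^2)]

noncomputable def Kpsi (q : ℕ) : ℝ :=
  ((q:ℝ)+1) * (2*Real.sqrt q) * (16*(q:ℝ) + 2*((q:ℝ)+1)^2)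

lemma abs_psiD_le (q : ℕ) (hq : 2 ≤ q) {l : ℝ}
    (hl : l ∈ Set.Ioo (-(2*Real.sqrt q)) (2*Real.sqrt q)) :
    |psiD q l| ≤ Kpsi q / Real.sqrt (4*q - l^2) := by
  have h4q : 0 < 4*(q:ℝ) - l^2 := by linarith [sq_lt_4q q hl]
  have hg : 0 < Real.sqrt (4*(q:ℝ) - l^2) := Real.sqrt_pos.mpr h4q
  set g := Real.sqrt (4*(q:ℝ) - l^2) with hgdef
  have hg2 : g^2 = 4*(q:ℝ) - l^2 := Real.sq_sqrt (le_of_lt h4q)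
  have hden1 : (1:ℝ) ≤ ((q:ℝ)+1)^2 - l^2 := den_ge q hq (le_of_lt (sq_lt_4q q hl))
  have hdenne : (2*(((q:ℝ)+1)^2 - l^2)) ≠ 0 := by linarith
  have hid : psiD q l * g =
      (((q:ℝ)+1)*l*(4*g^2 - 2*(((q:ℝ)+1)^2 - l^2))) / (2*(((q:ℝ)+1)^2 - l^2))^2 := by
    rw [psiD, ← hgdef]
    field_simp
    ring
  have hl2 : |l| ≤ 2*Real.sqrt q := le_of_lt (abs_lt.mpr ⟨hl.1, hl.2⟩)
  have hmid : |4*g^2 - 2*(((q:ℝ)+1)^2 - l^2)| ≤ 16*(q:ℝ) + 2*((q:ℝ)+1)^2 := by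
    rw [abs_le]; constructor <;> nlinarith [sq_nonneg l]
  have hnum : |((q:ℝ)+1)*l*(4*g^2 - 2*(((q:ℝ)+1)^2 - l^2))| ≤ Kpsi q := by
    rw [Kpsi, abs_mul, abs_mul, abs_of_nonneg (by positivity : (0:ℝ) ≤ (q:ℝ)+1)]
    exact mul_le_mul (mul_le_mul le_rfl hl2 (abs_nonneg _) (by positivity)) hmid
      (abs_nonneg _) (by positivity)
  have hden4 : (1:ℝ) ≤ (2*(((q:ℝ)+1)^2 - l^2))^2 := by nlinarith
  rw [le_div_iff₀ hg]
  calc |psiD q l| * g = |psiD q l * g| := by rw [abs_mul, abs_of_pos hg]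
    _ = |((q:ℝ)+1)*l*(4*g^2 - 2*(((q:ℝ)+1)^2 - l^2))| / (2*(((q:ℝ)+1)^2 - l^2))^2 := by
        rw [hid, abs_div, abs_of_pos (by nlinarith : (0:ℝ) < (2*(((q:ℝ)+1)^2 - l^2))^2)]
    _ ≤ |((q:ℝ)+1)*l*(4*g^2 - 2*(((q:ℝ)+1)^2 - l^2))| / 1 :=
        div_le_div_of_nonneg_left (abs_nonneg _) one_pos hden4
    _ = |((q:ℝ)+1)*l*(4*g^2 - 2*(((q:ℝ)+1)^2 - l^2))| := div_one _
    _ ≤ Kpsi q := hnum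

lemma Psi_endpoint (q : ℕ) : Psi q (2*Real.sqrt q) = 0 ∧ Psi q (-(2*Real.sqrt q)) = 0 := by
  have h : ∀ s : ℝ, s^2 = 4*(q:ℝ) → Psi q s = 0 := by
    intro s hs
    rw [Psi, hs]
    simp
  constructor
  · exact h _ (by rw [mul_pow, Real.sq_sqrt (by positivity)]; ring)
  · exact h _ (by rw [neg_pow, mul_pow, Real.sq_sqrt (by positivity)]; ring)

lemma continuousOn_Psi (q : ℕ) (hq : 2 ≤ q) :
    ContinuousOn (Psi q) (Set.Icc (-(2*Real.sqrt q)) (2*Real.sqrt q)) := by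
  apply ContinuousOn.div
  · exact (continuous_const.mul ((continuous_const.sub (continuous_pow 2)).sqrt)).continuousOn
  · exact (continuous_const.mul (continuous_const.sub (continuous_pow 2))).continuousOn
  · intro l hl
    have := den_ge q hq (sq_le_4q q hl)
    intro hcon
    rw [mul_eq_zero] at hcon
    rcases hcon with h | h
    · norm_num at h
    · linarith

lemma rpow_neg_half_eq (x : ℝ) (hx : 0 < x) : x ^ (-(1/2):ℝ) = 1/Real.sqrt x := by
  rw [Real.rpow_neg hx.le, Real.sqrt_eq_rpow]
  exact (one_div _).symm

lemma w_meas (q : ℕ) : Measurable (fun l : ℝ => (4*(q:ℝ) - l^2) ^ (-(1/2):ℝ)) := by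
  fun_prop

lemma w_integrable (q : ℕ) (hq : 2 ≤ q) :
    IntervalIntegrable (fun l : ℝ => (4*(q:ℝ) - l^2) ^ (-(1/2):ℝ)) volume
      (-(2*Real.sqrt q)) (2*Real.sqrt q) := by
  set a := 2*Real.sqrt q with ha
  have hq0 : (0:ℝ) < q := by exact_mod_cast Nat.lt_of_lt_of_le Nat.zero_lt_two hq
  have ha0 : 0 < a := by rw [ha]; positivity
  have ha2 : a^2 = 4*(q:ℝ) := by rw [ha, mul_pow, Real.sq_sqrt hq0.le]; ring
  have base : IntervalIntegrable (fun x : ℝ => x ^ (-(1/2):ℝ)) volume 0 a :=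
    intervalIntegrable_rpow' (by norm_num)
  -- right piece on [0, a]
  have right : IntervalIntegrable (fun l : ℝ => (4*(q:ℝ) - l^2) ^ (-(1/2):ℝ)) volume 0 a := by
    have comp : IntervalIntegrable (fun x : ℝ => (a - x) ^ (-(1/2):ℝ)) volume 0 a := by
      have h := base.comp_sub_left a
      simpa using h.symm
    have dom := comp.const_mul (a ^ (-(1/2):ℝ))
    refine dom.mono_fun ((w_meas q).aestronglyMeasurable) ?_
    rw [Filter.EventuallyLE, ae_restrict_iff' measurableSet_uIoc]
    refine Filter.Eventually.of_forall (fun x hx => ?_)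
    rw [Set.uIoc_of_le ha0.le] at hx
    have hx0 : 0 < x := hx.1
    have hxa : x ≤ a := hx.2
    have hnn : (0:ℝ) ≤ 4*(q:ℝ) - x^2 := by nlinarith
    rw [Real.norm_eq_abs, abs_of_nonneg (Real.rpow_nonneg hnn _), Real.norm_eq_abs,
      abs_of_nonneg (mul_nonneg (Real.rpow_nonneg ha0.le _)
        (Real.rpow_nonneg (by linarith : (0:ℝ) ≤ a - x) _))]
    rcases eq_or_lt_of_le hxa with heq | hlt
    · rw [show 4*(q:ℝ) - x^2 = 0 by nlinarith, Real.zero_rpow (by norm_num),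
        show a - x = (0:ℝ) by rw [heq]; ring, Real.zero_rpow (by norm_num), mul_zero]
    · have h1 : 0 < a * (a - x) := by nlinarith
      have h2 : a * (a - x) ≤ 4*(q:ℝ) - x^2 := by nlinarith
      calc (4*(q:ℝ) - x^2) ^ (-(1/2):ℝ) ≤ (a * (a - x)) ^ (-(1/2):ℝ) :=
            Real.rpow_le_rpow_of_nonpos h1 h2 (by norm_num)
        _ = a ^ (-(1/2):ℝ) * (a - x) ^ (-(1/2):ℝ) :=
            (Real.mul_rpow ha0.le (by linarith : (0:ℝ) ≤ a - x))
  -- left piece on [-a, 0]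
  have left : IntervalIntegrable (fun l : ℝ => (4*(q:ℝ) - l^2) ^ (-(1/2):ℝ)) volume (-a) 0 := by
    have comp : IntervalIntegrable (fun x : ℝ => (x + a) ^ (-(1/2):ℝ)) volume (-a) 0 := by
      have h := base.comp_add_right a
      simpa using h
    have dom := comp.const_mul (a ^ (-(1/2):ℝ))
    refine dom.mono_fun ((w_meas q).aestronglyMeasurable) ?_
    rw [Filter.EventuallyLE, ae_restrict_iff' measurableSet_uIoc]
    refine Filter.Eventually.of_forall (fun x hx => ?_)
    rw [Set.uIoc_of_le (by linarith : -a ≤ (0:ℝ))] at hx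
    have hx0 : -a < x := hx.1
    have hxa : x ≤ 0 := hx.2
    have hnn : (0:ℝ) ≤ 4*(q:ℝ) - x^2 := by nlinarith
    rw [Real.norm_eq_abs, abs_of_nonneg (Real.rpow_nonneg hnn _), Real.norm_eq_abs,
      abs_of_nonneg (mul_nonneg (Real.rpow_nonneg ha0.le _)
        (Real.rpow_nonneg (by linarith : (0:ℝ) ≤ x + a) _))]
    have h1 : 0 < a * (x + a) := by nlinarith
    have h2 : a * (x + a) ≤ 4*(q:ℝ) - x^2 := by nlinarith
    calc (4*(q:ℝ) - x^2) ^ (-(1/2):ℝ) ≤ (a * (x + a)) ^ (-(1/2):ℝ) :=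
          Real.rpow_le_rpow_of_nonpos h1 h2 (by norm_num)
      _ = a ^ (-(1/2):ℝ) * (x + a) ^ (-(1/2):ℝ) :=
          (Real.mul_rpow ha0.le (by linarith : (0:ℝ) ≤ x + a))
  exact left.trans right


lemma deriv_Phi (q n : ℕ) :
    deriv (Phi q n) = fun l => (Polynomial.derivative (Pq q n)).eval l := by
  rw [Phi_eq]
  funext l
  exact Polynomial.deriv _

end Aux

/-- There is a constant `C` depending only on `q` such that for every `n ≥ 1` and `t > 0`,
`|∫_{−2√q}^{2√q} e^{itλ} Ψ(λ)Φ_n'(λ) dλ| ≤ C/t`. -/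
theorem PsiPhi_deriv_oscillatory_bound (q : ℕ) (hq : 2 ≤ q) :
    ∃ C : ℝ, 0 < C ∧ ∀ n : ℕ, 1 ≤ n → ∀ t : ℝ, 0 < t →
      ‖∫ l in (-(2*Real.sqrt q))..(2*Real.sqrt q),
          Complex.exp (Complex.I * t * l) *
            Complex.ofReal (Psi q l * deriv (Phi q n) l)‖
        ≤ C / t := by
  obtain ⟨M, hM1, hM⟩ := exists_M q hq
  have hq0 : (0:ℝ) < q := by exact_mod_cast Nat.lt_of_lt_of_le Nat.zero_lt_two hq
  set a : ℝ := 2*Real.sqrt q with ha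
  have ha0 : 0 < a := by rw [ha]; positivity
  have ha2 : a^2 = 4*(q:ℝ) := by rw [ha, mul_pow, Real.sq_sqrt hq0.le]; ring
  set Ktot : ℝ := (Kpsi q + ((q:ℝ)+1) * a * a) * M with hKtot
  have hKpsi0 : 0 ≤ Kpsi q := by rw [Kpsi]; positivity
  have hKtot0 : 0 < Ktot := by
    rw [hKtot]
    have : (0:ℝ) < ((q:ℝ)+1) * a * a := by positivity
    nlinarith
  set w : ℝ → ℝ := fun l => (4*(q:ℝ) - l^2) ^ (-(1/2):ℝ) with hw
  have hwint : IntervalIntegrable w volume (-a) a := w_integrable q hq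
  have hhint : IntervalIntegrable (fun l => Ktot * w l) volume (-a) a := hwint.const_mul Ktot
  set C0 : ℝ := ∫ l in (-a)..a, Ktot * w l with hC0
  have hC00 : 0 ≤ C0 := by
    rw [hC0]
    apply intervalIntegral.integral_nonneg (by linarith)
    intro u hu
    have : (0:ℝ) ≤ 4*(q:ℝ) - u^2 := by
      have := sq_le_4q q hu
      linarith
    exact mul_nonneg hKtot0.le (Real.rpow_nonneg this _)
  refine ⟨C0 + 1, by linarith, fun n hn t ht => ?_⟩
  -- definitions
  set f : ℝ → ℝ := fun l => Psi q l * (Polynomial.derivative (Pq q n)).eval l with hf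
  set fp : ℝ → ℝ := fun l => psiD q l * (Polynomial.derivative (Pq q n)).eval l
    + Psi q l * (Polynomial.derivative (Polynomial.derivative (Pq q n))).eval l with hfp
  set E : ℝ → ℂ := fun l => Complex.exp (Complex.I * t * l) with hE
  set F : ℝ → ℂ := fun l => E l * (f l : ℂ) with hF
  set Fp : ℝ → ℂ := fun l => Complex.I * t * (E l * (f l : ℂ)) + E l * (fp l : ℂ) with hFp
  have hEcont : Continuous E := by
    apply Complex.continuous_exp.comp
    exact (continuous_const.mul Complex.continuous_ofReal)
  have hEnorm : ∀ l : ℝ, ‖E l‖ = 1 := by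
    intro l
    rw [hE]
    simp [Complex.norm_exp]
  -- derivative of F on Ioo
  have hderivF : ∀ l ∈ Set.Ioo (-a) a, HasDerivAt F (Fp l) l := by
    intro l hl
    have hPsi := hasDerivAt_Psi q hq hl
    have hpoly : HasDerivAt (fun y => (Polynomial.derivative (Pq q n)).eval y)
        ((Polynomial.derivative (Polynomial.derivative (Pq q n))).eval l) l :=
      Polynomial.hasDerivAt _ l
    have hfd : HasDerivAt f (fp l) l := hPsi.mul hpoly
    have hinner : HasDerivAt (fun y : ℝ => Complex.I * t * (y:ℂ)) (Complex.I * t) l := by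
      simpa using (Complex.ofRealCLM.hasDerivAt (x := l)).const_mul (Complex.I * (t:ℂ))
    have hexp : HasDerivAt E (Complex.I * t * E l) l := by
      have h := hinner.cexp
      rw [hE]
      convert h using 1
      ring
    have hfC : HasDerivAt (fun y => ((f y : ℝ) : ℂ)) ((fp l : ℝ) : ℂ) l := hfd.ofReal_comp
    have := hexp.mul hfC
    rw [hF, hFp]
    convert this using 1
    · rfl
    · rfl
    · ring
  -- continuity of F on Icc
  have hcontF : ContinuousOn F (Set.Icc (-a) a) := by
    apply ContinuousOn.mul (hEcont.continuousOn)
    exact Complex.continuous_ofReal.comp_continuousOn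
      ((continuousOn_Psi q hq).mul (Polynomial.continuous _).continuousOn)
  -- bound for fp on Ioo
  have hfpbound : ∀ l ∈ Set.Ioo (-a) a, |fp l| ≤ Ktot * w l := by
    intro l hl
    have h4q : 0 < 4*(q:ℝ) - l^2 := by
      have := sq_lt_4q q hl
      linarith
    have hg : 0 < Real.sqrt (4*(q:ℝ) - l^2) := Real.sqrt_pos.mpr h4q
    have hga : Real.sqrt (4*(q:ℝ) - l^2) ≤ a := by
      rw [ha, ← sqrt4q q]
      exact Real.sqrt_le_sqrt (by nlinarith [sq_nonneg l])
    have hlIcc : l ∈ Set.Icc (-a) a := Set.mem_Icc.mpr ⟨hl.1.le, hl.2.le⟩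
    have hlabs : |l| ≤ 2*Real.sqrt q := abs_le.mpr ⟨hl.1.le, hl.2.le⟩
    have h1 : |psiD q l| ≤ Kpsi q / Real.sqrt (4*(q:ℝ) - l^2) := abs_psiD_le q hq hl
    have h2 : |(Polynomial.derivative (Pq q n)).eval l| ≤ M :=
      (abs_eval_dPq_le q n hq hlabs).trans (hM n)
    have h3 : |(Polynomial.derivative (Polynomial.derivative (Pq q n))).eval l| ≤ M :=
      (abs_eval_ddPq_le q n hq hlabs).trans (hM n)
    have h4 : |Psi q l| ≤ ((q:ℝ)+1) * a := abs_Psi_le q hq hlIcc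
    have hM0 : (0:ℝ) ≤ M := by linarith
    have step1 : |fp l| ≤ (Kpsi q / Real.sqrt (4*(q:ℝ) - l^2)) * M + (((q:ℝ)+1)*a) * M := by
      rw [hfp]
      refine (abs_add_le _ _).trans ?_
      rw [abs_mul, abs_mul]
      exact add_le_add (mul_le_mul h1 h2 (abs_nonneg _) (by positivity))
        (mul_le_mul h4 h3 (abs_nonneg _) (by positivity))
    have step2 : (Kpsi q / Real.sqrt (4*(q:ℝ) - l^2)) * M + (((q:ℝ)+1)*a) * M
        ≤ Ktot / Real.sqrt (4*(q:ℝ) - l^2) := by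
      rw [le_div_iff₀ hg, add_mul]
      have e1 : (Kpsi q / Real.sqrt (4*(q:ℝ) - l^2)) * M * Real.sqrt (4*(q:ℝ) - l^2)
          = Kpsi q * M := by field_simp
      rw [e1, hKtot]
      have h5 : (((q:ℝ)+1)*a) * M * Real.sqrt (4*(q:ℝ) - l^2) ≤ (((q:ℝ)+1)*a) * M * a :=
        mul_le_mul_of_nonneg_left hga (by positivity)
      nlinarith
    have step3 : Ktot / Real.sqrt (4*(q:ℝ) - l^2) = Ktot * w l := by
      have hwl : w l = 1/Real.sqrt (4*(q:ℝ) - l^2) := rpow_neg_half_eq _ h4q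
      rw [hwl, ← div_eq_mul_one_div]
    calc |fp l| ≤ _ := step1
      _ ≤ _ := step2
      _ = _ := step3
  -- measurability of fp
  have hfpmeas : Measurable fp := by
    rw [hfp]
    unfold psiD Psi
    fun_prop
  have hae_ne : ∀ᵐ (x:ℝ) ∂(volume : Measure ℝ), x ≠ a := by
    have h : (volume : Measure ℝ) {a} = 0 := Real.volume_singleton
    rw [MeasureTheory.ae_iff]
    convert h using 2
    ext x
    simp
  have hint1 : IntervalIntegrable (fun l => Complex.I * t * (E l * (f l : ℂ))) volume (-a) a := by
    apply ContinuousOn.intervalIntegrable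
    rw [Set.uIcc_of_le (by linarith : -a ≤ a)]
    exact continuous_const.continuousOn.mul hcontF
  have hBae : ∀ᵐ (x:ℝ) ∂(volume.restrict (Set.uIoc (-a) a)),
      ‖E x * (fp x : ℂ)‖ ≤ Ktot * w x := by
    rw [ae_restrict_iff' measurableSet_uIoc]
    filter_upwards [hae_ne] with x hxa hxm
    rw [Set.uIoc_of_le (by linarith : -a ≤ a)] at hxm
    have hxIoo : x ∈ Set.Ioo (-a) a := ⟨hxm.1, lt_of_le_of_ne hxm.2 hxa⟩
    rw [norm_mul, hEnorm x, one_mul, Complex.norm_real, Real.norm_eq_abs]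
    exact hfpbound x hxIoo
  have hint2 : IntervalIntegrable (fun l => E l * (fp l : ℂ)) volume (-a) a := by
    refine hhint.mono_fun ?_ ?_
    · exact (hEcont.measurable.mul (Complex.measurable_ofReal.comp hfpmeas)).aestronglyMeasurable
    · refine hBae.mono (fun x hx => hx.trans ?_)
      exact le_abs_self _
  have hintFp : IntervalIntegrable Fp volume (-a) a := by
    rw [hFp]
    exact hint1.add hint2
  have hFa : F a = 0 := by
    rw [hF, hf]
    have : Psi q a = 0 := (Psi_endpoint q).1
    simp [this]
  have hFna : F (-a) = 0 := by
    rw [hF, hf]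
    have : Psi q (-a) = 0 := (Psi_endpoint q).2
    simp [this]
  have hFTC : ∫ l in (-a)..a, Fp l = 0 := by
    rw [intervalIntegral.integral_eq_sub_of_hasDeriv_right_of_le (by linarith : -a ≤ a) hcontF
      (fun x hx => (hderivF x hx).hasDerivWithinAt) hintFp, hFa, hFna, sub_zero]
  have hsplit : ∫ l in (-a)..a, Fp l =
      (∫ l in (-a)..a, Complex.I * t * (E l * (f l : ℂ)))
        + ∫ l in (-a)..a, E l * (fp l : ℂ) := by
    rw [hFp]
    exact intervalIntegral.integral_add hint1 hint2
  have hconst : ∫ l in (-a)..a, Complex.I * t * (E l * (f l:ℂ))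
      = Complex.I * t * ∫ l in (-a)..a, E l * (f l:ℂ) :=
    intervalIntegral.integral_const_mul _ _
  have hkey : Complex.I * t * (∫ l in (-a)..a, E l * (f l:ℂ))
      = - ∫ l in (-a)..a, E l * (fp l:ℂ) := by
    apply eq_neg_of_add_eq_zero_left
    rw [← hconst, ← hsplit, hFTC]
  have hnormIt : ‖Complex.I * (t:ℂ)‖ = t := by
    rw [norm_mul, Complex.norm_I, one_mul, Complex.norm_real, Real.norm_eq_abs, abs_of_pos ht]
  have hnorm2 : ‖∫ l in (-a)..a, E l * (fp l:ℂ)‖ ≤ C0 := by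
    calc ‖∫ l in (-a)..a, E l * (fp l:ℂ)‖ ≤ |∫ l in (-a)..a, Ktot * w l| :=
          intervalIntegral.norm_integral_le_abs_of_norm_le hBae hhint
      _ = C0 := abs_of_nonneg hC00
  have hEq : t * ‖∫ l in (-a)..a, E l * (f l:ℂ)‖ = ‖∫ l in (-a)..a, E l * (fp l:ℂ)‖ := by
    rw [← hnormIt, ← norm_mul, hkey, norm_neg]
  have h2eq : (∫ l in (-a)..a, Complex.exp (Complex.I * t * l) *
      Complex.ofReal (Psi q l * deriv (Phi q n) l)) = ∫ l in (-a)..a, E l * (f l:ℂ) := by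
    apply intervalIntegral.integral_congr
    intro x hx
    rw [deriv_Phi q n]
  rw [h2eq, le_div_iff₀ ht]
  calc ‖∫ l in (-a)..a, E l * (f l:ℂ)‖ * t = t * ‖∫ l in (-a)..a, E l * (f l:ℂ)‖ := by ring
    _ = ‖∫ l in (-a)..a, E l * (fp l:ℂ)‖ := hEq
    _ ≤ C0 := hnorm2
    _ ≤ C0 + 1 := by linarith
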